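/- Let f : [a,b] → ℝ be a probability density with 0 ≤ m ≤ f(t) ≤ M on [a,b], F(x) = ∫ₐˣ f(t)dt, and E(X) = ∫ₐᵇ t f(t)dt. Then |(1/2)F((a+b)/2) + 1/4 - (b - E(X))/(b-a)| ≤ ((b-a)/16)(M - m). -/

import Mathlib

open MeasureTheory intervalIntegral

lemma aux_abs_int (u v : ℝ) (huv : u ≤ v) :
    (∫ t in u..v, |t - (u + v) / 2|) = (v - u) ^ 2 / 4 := by
  have hcont : Continuous fun t : ℝ => |t - (u + v) / 2| :=
    continuous_abs.comp (continuous_id.sub continuous_const)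
  have h1 : IntervalIntegrable (fun t : ℝ => |t - (u + v) / 2|) volume u ((u + v) / 2) :=
    hcont.intervalIntegrable _ _
  have h2 : IntervalIntegrable (fun t : ℝ => |t - (u + v) / 2|) volume ((u + v) / 2) v :=
    hcont.intervalIntegrable _ _
  rw [← integral_add_adjacent_intervals h1 h2]
  have e1 : (∫ t in u..(u + v) / 2, |t - (u + v) / 2|)
      = ∫ t in u..(u + v) / 2, ((u + v) / 2 - t) := by
    apply integral_congr
    intro t ht
    rw [Set.uIcc_of_le (by linarith)] at ht
    show |t - (u + v) / 2| = (u + v) / 2 - t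
    rw [abs_of_nonpos (by linarith [ht.2])]
    ring
  have e2 : (∫ t in ((u + v) / 2)..v, |t - (u + v) / 2|)
      = ∫ t in ((u + v) / 2)..v, (t - (u + v) / 2) := by
    apply integral_congr
    intro t ht
    rw [Set.uIcc_of_le (by linarith)] at ht
    show |t - (u + v) / 2| = t - (u + v) / 2
    rw [abs_of_nonneg (by linarith [ht.1])]
  rw [e1, e2]
  rw [integral_sub intervalIntegrable_const intervalIntegrable_id,
    integral_sub intervalIntegrable_id intervalIntegrable_const]
  simp [integral_id, intervalIntegral.integral_const, smul_eq_mul]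
  ring

lemma aux_bound (u v δ : ℝ) (huv : u ≤ v) (hδ : 0 ≤ δ) (g : ℝ → ℝ)
    (hg : ∀ t ∈ Set.Icc u v, |g t| ≤ δ)
    (hgint : IntervalIntegrable g volume u v) :
    |∫ t in u..v, (t - (u + v) / 2) * g t| ≤ δ * (v - u) ^ 2 / 4 := by
  have hk : IntervalIntegrable (fun t => (t - (u + v) / 2) * g t) volume u v :=
    hgint.continuousOn_mul ((continuous_id.sub continuous_const).continuousOn)
  calc |∫ t in u..v, (t - (u + v) / 2) * g t|
      ≤ ∫ t in u..v, |(t - (u + v) / 2) * g t| := abs_integral_le_integral_abs huv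
    _ ≤ ∫ t in u..v, |t - (u + v) / 2| * δ := by
        apply integral_mono_on huv hk.abs
          (((continuous_abs.comp (continuous_id.sub continuous_const)).mul
            continuous_const).intervalIntegrable _ _)
        intro t ht
        rw [abs_mul]
        exact mul_le_mul_of_nonneg_left (hg t ht) (abs_nonneg _)
    _ = δ * (v - u) ^ 2 / 4 := by
        rw [intervalIntegral.integral_mul_const, aux_abs_int u v huv]; ring

theorem stmt_17 (a b m M : ℝ) (f : ℝ → ℝ) (hab : a < b) (hmM : m < M) (hm : 0 ≤ m)
    (hbound : ∀ t ∈ Set.Icc a b, m ≤ f t ∧ f t ≤ M)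
    (hint : IntervalIntegrable f MeasureTheory.volume a b)
    (hprob : (∫ t in a..b, f t) = 1)
    (F : ℝ → ℝ) (hF : ∀ x, F x = ∫ t in a..x, f t)
    (E : ℝ) (hE : E = ∫ t in a..b, t * f t) :
    |1 / 2 * F ((a + b) / 2) + 1 / 4 - (b - E) / (b - a)| ≤ (b - a) / 16 * (M - m) := by
  set c : ℝ := (a + b) / 2 with hc
  have hac : a ≤ c := by rw [hc]; linarith
  have hcb : c ≤ b := by rw [hc]; linarith
  have hba : (0:ℝ) < b - a := by linarith
  set μ : ℝ := (m + M) / 2 with hμ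
  set δ : ℝ := (M - m) / 2 with hδdef
  have hδ : 0 ≤ δ := by rw [hδdef]; linarith
  set g : ℝ → ℝ := fun t => f t - μ with hgdef
  -- integrability
  have hf1 : IntervalIntegrable f volume a c := by
    apply hint.mono_set
    rw [Set.uIcc_of_le hac, Set.uIcc_of_le hab.le]
    exact Set.Icc_subset_Icc le_rfl hcb
  have hf2 : IntervalIntegrable f volume c b := by
    apply hint.mono_set
    rw [Set.uIcc_of_le hcb, Set.uIcc_of_le hab.le]
    exact Set.Icc_subset_Icc hac le_rfl
  have hg1 : IntervalIntegrable g volume a c := hf1.sub intervalIntegrable_const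
  have hg2 : IntervalIntegrable g volume c b := hf2.sub intervalIntegrable_const
  have htf1 : IntervalIntegrable (fun t => t * f t) volume a c :=
    hf1.continuousOn_mul continuous_id.continuousOn
  have htf2 : IntervalIntegrable (fun t => t * f t) volume c b :=
    hf2.continuousOn_mul continuous_id.continuousOn
  -- notation for pieces
  set A₁ : ℝ := ∫ t in a..c, f t with hA1
  set A₂ : ℝ := ∫ t in c..b, f t with hA2
  set B₁ : ℝ := ∫ t in a..c, t * f t with hB1
  set B₂ : ℝ := ∫ t in c..b, t * f t with hB2
  have hAsum : A₁ + A₂ = 1 := by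
    rw [hA1, hA2, integral_add_adjacent_intervals hf1 hf2]; exact hprob
  have hBsum : E = B₁ + B₂ := by
    rw [hE, hB1, hB2, integral_add_adjacent_intervals htf1 htf2]
  -- compute the kernel integrals
  have hI1 : (∫ t in a..c, (t - (a + c) / 2) * g t)
      = B₁ - (a + c) / 2 * A₁ - μ * ((c ^ 2 - a ^ 2) / 2) + (a + c) / 2 * μ * (c - a) := by
    have e : ∀ t : ℝ, (t - (a + c) / 2) * g t
        = t * f t - (a + c) / 2 * f t - μ * t + (a + c) / 2 * μ := by
      intro t; rw [hgdef]; ring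
    simp_rw [e]
    rw [integral_add ((htf1.sub (hf1.const_mul _)).sub (intervalIntegrable_id.const_mul _))
          intervalIntegrable_const,
        integral_sub (htf1.sub (hf1.const_mul _)) (intervalIntegrable_id.const_mul _),
        integral_sub htf1 (hf1.const_mul _),
        intervalIntegral.integral_const_mul, intervalIntegral.integral_const_mul, integral_id, intervalIntegral.integral_const]
    simp only [smul_eq_mul, ← hA1, ← hB1]
    ring
  have hI2 : (∫ t in c..b, (t - (c + b) / 2) * g t)
      = B₂ - (c + b) / 2 * A₂ - μ * ((b ^ 2 - c ^ 2) / 2) + (c + b) / 2 * μ * (b - c) := by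
    have e : ∀ t : ℝ, (t - (c + b) / 2) * g t
        = t * f t - (c + b) / 2 * f t - μ * t + (c + b) / 2 * μ := by
      intro t; rw [hgdef]; ring
    simp_rw [e]
    rw [integral_add ((htf2.sub (hf2.const_mul _)).sub (intervalIntegrable_id.const_mul _))
          intervalIntegrable_const,
        integral_sub (htf2.sub (hf2.const_mul _)) (intervalIntegrable_id.const_mul _),
        integral_sub htf2 (hf2.const_mul _),
        intervalIntegral.integral_const_mul, intervalIntegral.integral_const_mul, integral_id, intervalIntegral.integral_const]
    simp only [smul_eq_mul, ← hA2, ← hB2]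
    ring
  -- key identity
  have key : 1 / 2 * F ((a + b) / 2) + 1 / 4 - (b - E) / (b - a)
      = ((∫ t in a..c, (t - (a + c) / 2) * g t)
        + (∫ t in c..b, (t - (c + b) / 2) * g t)) / (b - a) := by
    rw [hI1, hI2, hF, hBsum]
    have hFc : (∫ t in a..(a + b) / 2, f t) = A₁ := by rw [hA1, hc]
    rw [hFc]
    have hA2' : A₂ = 1 - A₁ := by linarith
    rw [hA2', hc]
    field_simp
    ring
  -- bounds
  have hbg1 : ∀ t ∈ Set.Icc a c, |g t| ≤ δ := by
    intro t ht
    have ht' : t ∈ Set.Icc a b := ⟨ht.1, le_trans ht.2 hcb⟩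
    have := hbound t ht'
    rw [hgdef, hμ, hδdef, abs_le]
    constructor <;> simp <;> linarith [this.1, this.2]
  have hbg2 : ∀ t ∈ Set.Icc c b, |g t| ≤ δ := by
    intro t ht
    have ht' : t ∈ Set.Icc a b := ⟨le_trans hac ht.1, ht.2⟩
    have := hbound t ht'
    rw [hgdef, hμ, hδdef, abs_le]
    constructor <;> simp <;> linarith [this.1, this.2]
  have b1 := aux_bound a c δ hac hδ g hbg1 hg1
  have b2 := aux_bound c b δ hcb hδ g hbg2 hg2
  have hca : c - a = (b - a) / 2 := by rw [hc]; ring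
  have hbc : b - c = (b - a) / 2 := by rw [hc]; ring
  rw [key, abs_div, abs_of_pos hba, div_le_iff₀ hba]
  calc |(∫ t in a..c, (t - (a + c) / 2) * g t) + ∫ t in c..b, (t - (c + b) / 2) * g t|
      ≤ |∫ t in a..c, (t - (a + c) / 2) * g t| + |∫ t in c..b, (t - (c + b) / 2) * g t| :=
        abs_add_le _ _
    _ ≤ δ * (c - a) ^ 2 / 4 + δ * (b - c) ^ 2 / 4 := add_le_add b1 b2
    _ ≤ (b - a) / 16 * (M - m) * (b - a) := by
        rw [hca, hbc, hδdef]; nlinarith [sq_nonneg (b - a)]
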